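/- Assume φ is strictly convex and lim_{x→∞} φ(x)/x = ∞. Let t ∈ [0,1]^m and let M be a nonempty closed convex subset of [0,1]^m such that M ∩ {s ∈ [0,1]^m : supp(s) ⊆ supp(t)} ≠ ∅. Then the φ-projection of t on M exists and is unique, and it coincides with the unique φ-projection of t on M ∩ {s ∈ [0,1]^m : supp(s) ⊆ supp(t)}. -/

import Mathlib

open Filter Topology

/-- The extended-real-valued integrand `f(v,w)` of a `φ`-divergence:
`f(v,w) = w·φ(v/w)` if `w > 0`, `f(v,0) = v·L` if `v > 0`, and `f(0,0) = 0`,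
where `L = lim_{x→∞} φ(x)/x ∈ ℝ ∪ {∞}`. -/
noncomputable def phiF (φ : ℝ → ℝ) (L : EReal) (v w : ℝ) : EReal :=
  if 0 < w then ((w * φ (v / w) : ℝ) : EReal)
  else if 0 < v then (v : EReal) * L
  else 0

/-- The `φ`-divergence `D_φ(s∣t) = Σ_{i=1}^m f(s_i, t_i)` of `s` relative to `t`. -/
noncomputable def Dphi (φ : ℝ → ℝ) (L : EReal) {m : ℕ} (s t : Fin m → ℝ) : EReal :=
  ∑ i, phiF φ L (s i) (t i)

/-- `p` is a `φ`-projection of `t` on `M`: `p ∈ M` and `D_φ(p∣t) = inf_{s ∈ M} D_φ(s∣t)`. -/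
def IsPhiProj (φ : ℝ → ℝ) (L : EReal) {m : ℕ} (M : Set (Fin m → ℝ))
    (t p : Fin m → ℝ) : Prop :=
  p ∈ M ∧ Dphi φ L p t = ⨅ s ∈ M, Dphi φ L s t

lemma myCoeSum {ι : Type*} (s : Finset ι) (f : ι → ℝ) :
    ((∑ i ∈ s, f i : ℝ) : EReal) = ∑ i ∈ s, ((f i : ℝ) : EReal) := by
  induction s using Finset.cons_induction with
  | empty => simp
  | cons a s ha ih => rw [Finset.sum_cons, Finset.sum_cons, EReal.coe_add, ih]

lemma mySumNeBot {ι : Type*} (s : Finset ι) (g : ι → EReal) (hb : ∀ i ∈ s, g i ≠ ⊥) :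
    ∑ i ∈ s, g i ≠ ⊥ := by
  induction s using Finset.cons_induction with
  | empty => simp
  | cons a s ha ih =>
    rw [Finset.sum_cons]
    intro hc
    rcases EReal.add_eq_bot_iff.mp hc with h | h
    · exact hb a (Finset.mem_cons_self a s) h
    · exact ih (fun i hi => hb i (Finset.mem_cons_of_mem hi)) h

lemma mySumTop {ι : Type*} (s : Finset ι) (g : ι → EReal) (hb : ∀ i ∈ s, g i ≠ ⊥)
    (i0 : ι) (hi0 : i0 ∈ s) (h : g i0 = ⊤) : ∑ i ∈ s, g i = ⊤ := by
  induction s using Finset.cons_induction with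
  | empty => simp at hi0
  | cons a s ha ih =>
    rw [Finset.sum_cons]
    rcases Finset.mem_cons.mp hi0 with rfl | hmem
    · rw [h, EReal.top_add_of_ne_bot
        (mySumNeBot s g (fun i hi => hb i (Finset.mem_cons_of_mem hi)))]
    · rw [ih (fun i hi => hb i (Finset.mem_cons_of_mem hi)) hmem,
        EReal.add_top_of_ne_bot (hb a (Finset.mem_cons_self a s))]

/-- if `φ` is strictly convex and `lim_{x→∞} φ(x)/x = ∞`, `t ∈ [0,1]^m`,
and `M ⊆ [0,1]^m` is nonempty closed convex with
`M ∩ {s ∈ [0,1]^m : supp(s) ⊆ supp(t)} ≠ ∅`, then the `φ`-projection of `t` on `M`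
exists, is unique, and coincides with the unique `φ`-projection of `t` on
`M ∩ {s ∈ [0,1]^m : supp(s) ⊆ supp(t)}`. -/
theorem statement5 (m : ℕ) (hm : 1 ≤ m) (φ : ℝ → ℝ)
    (hφconv : ConvexOn ℝ (Set.Ici 0) φ)
    (hφ0 : ContinuousWithinAt φ (Set.Ici 0) 0)
    (hL : Tendsto (fun x : ℝ => ((φ x / x : ℝ) : EReal)) atTop (𝓝 (⊤ : EReal)))
    (hφsc : StrictConvexOn ℝ (Set.Ici (0 : ℝ)) φ)
    (t : Fin m → ℝ) (ht : ∀ i, t i ∈ Set.Icc (0 : ℝ) 1)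
    (M : Set (Fin m → ℝ)) (hMne : M.Nonempty) (hMcl : IsClosed M)
    (hMconv : Convex ℝ M)
    (hMsub : ∀ s ∈ M, ∀ i, s i ∈ Set.Icc (0 : ℝ) 1)
    (hint : (M ∩ {s : Fin m → ℝ | (∀ i, s i ∈ Set.Icc (0 : ℝ) 1) ∧
        ∀ i, 0 < s i → 0 < t i}).Nonempty) :
    ∃ p : Fin m → ℝ,
      (∀ s, IsPhiProj φ ⊤ M t s ↔ s = p) ∧
      (∀ s, IsPhiProj φ ⊤
          (M ∩ {s : Fin m → ℝ | (∀ i, s i ∈ Set.Icc (0 : ℝ) 1) ∧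
            ∀ i, 0 < s i → 0 < t i}) t s ↔ s = p) := by
  classical
  set S : Set (Fin m → ℝ) := {s : Fin m → ℝ | (∀ i, s i ∈ Set.Icc (0 : ℝ) 1) ∧
      ∀ i, 0 < s i → 0 < t i} with hSdef
  set g : (Fin m → ℝ) → ℝ := fun s => ∑ i, t i * φ (s i / t i) with hgdef
  have htnn : ∀ i, 0 ≤ t i := fun i => (ht i).1
  -- finite value on S
  have hDeq : ∀ s ∈ S, Dphi φ ⊤ s t = ((g s : ℝ) : EReal) := by
    intro s hs
    rw [Dphi, hgdef, myCoeSum]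
    apply Finset.sum_congr rfl
    intro i _
    by_cases hti : 0 < t i
    · simp only [phiF, if_pos hti]
    · have ht0 : t i = 0 := le_antisymm (not_lt.mp hti) (htnn i)
      have hs0 : s i = 0 := le_antisymm (not_lt.mp (fun h => hti (hs.2 i h))) (hs.1 i).1
      simp [phiF, hti, hs0, ht0]
  have hnb : ∀ v w, phiF φ ⊤ v w ≠ ⊥ := by
    intro v w
    unfold phiF
    split_ifs with h1 h2
    · exact EReal.coe_ne_bot _
    · rw [EReal.coe_mul_top_of_pos h2]; simp
    · simp
  have hDtop : ∀ s ∈ M, s ∉ S → Dphi φ ⊤ s t = ⊤ := by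
    intro s hsM hsS
    have hex : ∃ i, 0 < s i ∧ ¬ 0 < t i := by
      by_contra h
      push_neg at h
      exact hsS ⟨hMsub s hsM, h⟩
    obtain ⟨i0, hsi0, hti0⟩ := hex
    apply mySumTop _ _ (fun i _ => hnb _ _) i0 (Finset.mem_univ i0)
    simp only [phiF, if_neg hti0, if_pos hsi0]
    exact EReal.coe_mul_top_of_pos hsi0
  -- continuity of φ on [0,∞)
  have hφcont : ContinuousOn φ (Set.Ici (0 : ℝ)) := by
    intro x hx
    rcases eq_or_lt_of_le (Set.mem_Ici.mp hx : (0 : ℝ) ≤ x) with h | h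
    · rw [← h]; exact hφ0
    · have hconvIoi : ConvexOn ℝ (Set.Ioi (0 : ℝ)) φ :=
        hφconv.subset (Set.Ioi_subset_Ici le_rfl) (convex_Ioi 0)
      have hc := hconvIoi.continuousOn isOpen_Ioi
      exact (hc.continuousAt (isOpen_Ioi.mem_nhds h)).continuousWithinAt
  -- continuity of g on the nonnegative orthant
  have hgcont : ContinuousOn g {s : Fin m → ℝ | ∀ i, 0 ≤ s i} := by
    apply continuousOn_finset_sum
    intro i _
    by_cases hti : 0 < t i
    · apply ContinuousOn.mul continuousOn_const
      have hc : ContinuousOn (fun s : Fin m → ℝ => s i / t i) {s : Fin m → ℝ | ∀ i, 0 ≤ s i} :=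
        Continuous.continuousOn (by continuity)
      exact hφcont.comp hc (fun s hs => div_nonneg (hs i) (le_of_lt hti))
    · have ht0 : t i = 0 := le_antisymm (not_lt.mp hti) (htnn i)
      simp only [ht0, zero_mul]
      exact continuousOn_const
  -- S is closed
  have hScl : IsClosed S := by
    have hSeq : S = (⋂ i, (fun s : Fin m → ℝ => s i) ⁻¹' (Set.Icc 0 1)) ∩
        (⋂ i, {s : Fin m → ℝ | 0 < s i → 0 < t i}) := by
      ext s
      simp [hSdef, Set.mem_iInter, forall_and]
    rw [hSeq]
    apply IsClosed.inter
    · exact isClosed_iInter fun i => isClosed_Icc.preimage (continuous_apply i)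
    · apply isClosed_iInter
      intro i
      by_cases hti : 0 < t i
      · have : {s : Fin m → ℝ | 0 < s i → 0 < t i} = Set.univ := by
          ext s; simp [hti]
        rw [this]; exact isClosed_univ
      · have : {s : Fin m → ℝ | 0 < s i → 0 < t i} =
            (fun s : Fin m → ℝ => s i) ⁻¹' (Set.Iic 0) := by
          ext s
          simp only [Set.mem_setOf_eq, Set.mem_preimage, Set.mem_Iic]
          constructor
          · intro h; exact not_lt.mp (fun hs => hti (h hs))
          · intro h hs; exact absurd hs (not_lt.mpr h)
        rw [this]; exact isClosed_Iic.preimage (continuous_apply i)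
  set M' := M ∩ S with hM'def
  have hM'S0 : M' ⊆ {s : Fin m → ℝ | ∀ i, 0 ≤ s i} := fun s hs i => (hs.2.1 i).1
  have hM'cpt : IsCompact M' := by
    have hbox : IsCompact (Set.Icc (fun _ : Fin m => (0 : ℝ)) (fun _ => 1)) := isCompact_Icc
    apply hbox.of_isClosed_subset (hMcl.inter hScl)
    intro s hs
    rw [Set.mem_Icc]
    exact ⟨fun i => (hs.2.1 i).1, fun i => (hs.2.1 i).2⟩
  obtain ⟨p, hpM', hpmin'⟩ := hM'cpt.exists_isMinOn hint (hgcont.mono hM'S0)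
  have hpmin : ∀ s ∈ M', g p ≤ g s := isMinOn_iff.mp hpmin'
  have hinf' : (⨅ s ∈ M', Dphi φ ⊤ s t) = ((g p : ℝ) : EReal) := by
    apply le_antisymm
    · have h := iInf₂_le (f := fun s (_ : s ∈ M') => Dphi φ ⊤ s t) p hpM'
      rwa [hDeq p hpM'.2] at h
    · apply le_iInf₂
      intro s hs
      rw [hDeq s hs.2]
      exact_mod_cast hpmin s hs
  have hinf : (⨅ s ∈ M, Dphi φ ⊤ s t) = ((g p : ℝ) : EReal) := by
    apply le_antisymm
    · have h := iInf₂_le (f := fun s (_ : s ∈ M) => Dphi φ ⊤ s t) p hpM'.1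
      rwa [hDeq p hpM'.2] at h
    · apply le_iInf₂
      intro s hs
      by_cases hsS : s ∈ S
      · rw [hDeq s hsS]; exact_mod_cast hpmin s ⟨hs, hsS⟩
      · rw [hDtop s hs hsS]; exact le_top
  -- uniqueness via strict convexity
  have huniq : ∀ s ∈ M', g s ≤ g p → s = p := by
    intro s hs hle
    by_contra hne
    obtain ⟨i0, hi0⟩ := Function.ne_iff.mp hne
    set r : Fin m → ℝ := (1/2 : ℝ) • s + (1/2 : ℝ) • p with hrdef
    have hri : ∀ i, r i = (s i + p i) / 2 := by
      intro i; simp [hrdef]; ring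
    have hrM : r ∈ M := hMconv hs.1 hpM'.1 (by norm_num) (by norm_num) (by norm_num)
    have hrS : r ∈ S := by
      constructor
      · intro i
        rw [hri i]
        constructor
        · have h1 := (hs.2.1 i).1; have h2 := (hpM'.2.1 i).1; linarith
        · have h1 := (hs.2.1 i).2; have h2 := (hpM'.2.1 i).2; linarith
      · intro i hri'
        rw [hri i] at hri'
        rcases lt_or_ge 0 (s i) with h | h
        · exact hs.2.2 i h
        · have hp' : 0 < p i := by linarith
          exact hpM'.2.2 i hp'
    have hkey : ∀ i, t i * φ (r i / t i) ≤
        (t i * φ (s i / t i) + t i * φ (p i / t i)) / 2 := by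
      intro i
      by_cases hti : 0 < t i
      · have ha : s i / t i ∈ Set.Ici (0 : ℝ) :=
          Set.mem_Ici.mpr (div_nonneg (hs.2.1 i).1 hti.le)
        have hb : p i / t i ∈ Set.Ici (0 : ℝ) :=
          Set.mem_Ici.mpr (div_nonneg (hpM'.2.1 i).1 hti.le)
        have hmid : r i / t i = (1/2 : ℝ) * (s i / t i) + (1/2 : ℝ) * (p i / t i) := by
          rw [hri i]; field_simp <;> ring
        have hcv := hφconv.2 ha hb (by norm_num : (0:ℝ) ≤ 1/2) (by norm_num : (0:ℝ) ≤ 1/2)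
          (by norm_num : (1/2 : ℝ) + 1/2 = 1)
        simp only [smul_eq_mul] at hcv
        rw [hmid]
        have hmul := mul_le_mul_of_nonneg_left hcv (htnn i)
        nlinarith [hmul]
      · have ht0 : t i = 0 := le_antisymm (not_lt.mp hti) (htnn i)
        rw [ht0]; simp
    have hti0 : 0 < t i0 := by
      by_contra h
      have hs0 : s i0 = 0 := le_antisymm (not_lt.mp fun hh => h (hs.2.2 i0 hh)) (hs.2.1 i0).1
      have hp0 : p i0 = 0 :=
        le_antisymm (not_lt.mp fun hh => h (hpM'.2.2 i0 hh)) (hpM'.2.1 i0).1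
      exact hi0 (hs0.trans hp0.symm)
    have hstrict : t i0 * φ (r i0 / t i0) <
        (t i0 * φ (s i0 / t i0) + t i0 * φ (p i0 / t i0)) / 2 := by
      have ha : s i0 / t i0 ∈ Set.Ici (0 : ℝ) :=
        Set.mem_Ici.mpr (div_nonneg (hs.2.1 i0).1 hti0.le)
      have hb : p i0 / t i0 ∈ Set.Ici (0 : ℝ) :=
        Set.mem_Ici.mpr (div_nonneg (hpM'.2.1 i0).1 hti0.le)
      have hab : s i0 / t i0 ≠ p i0 / t i0 := by
        intro h
        apply hi0
        field_simp at h
        exact h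
      have hmid : r i0 / t i0 = (1/2 : ℝ) * (s i0 / t i0) + (1/2 : ℝ) * (p i0 / t i0) := by
        rw [hri i0]; field_simp <;> ring
      have hcv := hφsc.2 ha hb hab (by norm_num : (0:ℝ) < 1/2) (by norm_num : (0:ℝ) < 1/2)
        (by norm_num : (1/2 : ℝ) + 1/2 = 1)
      simp only [smul_eq_mul] at hcv
      rw [hmid]
      have hmul := mul_lt_mul_of_pos_left hcv hti0
      nlinarith [hmul]
    have hlt : g r < (g s + g p) / 2 := by
      have h1 : g r < ∑ i, (t i * φ (s i / t i) + t i * φ (p i / t i)) / 2 := by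
        rw [hgdef]
        exact Finset.sum_lt_sum (fun i _ => hkey i) ⟨i0, Finset.mem_univ i0, hstrict⟩
      have h2 : ∑ i, (t i * φ (s i / t i) + t i * φ (p i / t i)) / 2
          = (g s + g p) / 2 := by
        rw [hgdef, ← Finset.sum_div, Finset.sum_add_distrib]
      rw [h2] at h1
      exact h1
    have hlt2 : g r < g p := by linarith
    exact absurd (hpmin r ⟨hrM, hrS⟩) (not_le.mpr hlt2)
  refine ⟨p, ?_, ?_⟩
  · intro s
    constructor
    · rintro ⟨hsM, hseq⟩
      rw [hinf] at hseq
      have hsS : s ∈ S := by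
        by_contra h
        rw [hDtop s hsM h] at hseq
        exact (EReal.coe_ne_top (g p)) hseq.symm
      rw [hDeq s hsS] at hseq
      have hgs : g s = g p := by exact_mod_cast hseq
      exact huniq s ⟨hsM, hsS⟩ hgs.le
    · rintro rfl
      exact ⟨hpM'.1, by rw [hDeq s hpM'.2, hinf]⟩
  · intro s
    constructor
    · rintro ⟨hsM', hseq⟩
      rw [hinf'] at hseq
      rw [hDeq s hsM'.2] at hseq
      have hgs : g s = g p := by exact_mod_cast hseq
      exact huniq s hsM' hgs.le
    · rintro rfl
      exact ⟨hpM', by rw [hDeq s hpM'.2, hinf']⟩
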